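/- The classic round-robin mechanism with additive valuations produces an envy-free up to one item (EF1) allocation: if agents pick items one at a time in a fixed cyclic order, each selecting a most-valued remaining item, then for every pair of agents i and j, either i does not envy j, or j's bundle contains an item whose removal eliminates i's envy. -/
import Mathlib


/-- The classic round-robin mechanism with additive valuations produces
an EF1 allocation. Steps `t : Fin m` are taken in increasing order; the agent acting
at step `t` is `t % n`, and it picks the good `pick t`. The greedy hypothesis says
the agent acting at step `t` values the good it picks at least as much as every good
still remaining (i.e. picked at a later step). -/
theorem round_robin_EF1 (n m : ℕ) (hn : 0 < n)
    (v : Fin n → Fin m → ℝ) (hv : ∀ i g, 0 ≤ v i g)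
    (pick : Fin m → Fin m) (hpick : Function.Bijective pick)
    (agent : Fin m → Fin n) (hagent : ∀ t : Fin m, (agent t : ℕ) = (t : ℕ) % n)
    (greedy : ∀ t t' : Fin m, t ≤ t' → v (agent t) (pick t') ≤ v (agent t) (pick t))
    (A : Fin n → Finset (Fin m))
    (hA : ∀ i : Fin n,
      A i = (Finset.univ.filter (fun t : Fin m => (t : ℕ) % n = (i : ℕ))).image pick) :
    ∀ i j : Fin n, (A j).Nonempty →
      ∃ g ∈ A j, ∑ x ∈ (A j).erase g, v i x ≤ ∑ x ∈ A i, v i x := by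
  intro i j hAj
  set Tj := Finset.univ.filter (fun t : Fin m => (t : ℕ) % n = (j : ℕ)) with hTj
  set Ti := Finset.univ.filter (fun t : Fin m => (t : ℕ) % n = (i : ℕ)) with hTi
  have hAje : A j = Tj.image pick := hA j
  have hAie : A i = Ti.image pick := hA i
  -- j < m
  have hjm : (j : ℕ) < m := by
    rcases hAj with ⟨g, hg⟩
    rw [hAje] at hg
    rcases Finset.mem_image.1 hg with ⟨t, ht, _⟩
    have htj : (t : ℕ) % n = j := (Finset.mem_filter.1 ht).2
    exact lt_of_le_of_lt (htj ▸ Nat.mod_le _ _) t.2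
  have hm : 0 < m := lt_of_le_of_lt (Nat.zero_le _) hjm
  set t0 : Fin m := ⟨j, hjm⟩ with ht0
  have ht0mem : t0 ∈ Tj := by
    simp only [hTj, Finset.mem_filter, Finset.mem_univ, true_and, ht0]
    exact Nat.mod_eq_of_lt j.2
  refine ⟨pick t0, by rw [hAje]; exact Finset.mem_image_of_mem _ ht0mem, ?_⟩
  have herase : (A j).erase (pick t0) = (Tj.erase t0).image pick := by
    rw [hAje, Finset.image_erase hpick.1]
  rw [herase, hAie,
    Finset.sum_image (fun x _ y _ h => hpick.1 h),
    Finset.sum_image (fun x _ y _ h => hpick.1 h)]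
  -- every remaining step of j is at least n + j
  have hge : ∀ t : Fin m, t ∈ Tj.erase t0 → n + (j : ℕ) ≤ (t : ℕ) := by
    intro t ht
    rcases Finset.mem_erase.1 ht with ⟨hne, htj⟩
    have htmod : (t : ℕ) % n = j := (Finset.mem_filter.1 htj).2
    have hdm := Nat.div_add_mod (t : ℕ) n
    rcases Nat.eq_zero_or_pos ((t : ℕ) / n) with h0 | h1
    · exfalso
      apply hne
      apply Fin.ext
      show (t : ℕ) = (j : ℕ)
      simp [h0] at hdm
      omega
    · have : n * 1 ≤ n * ((t : ℕ) / n) := Nat.mul_le_mul_left n h1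
      omega
  -- the matching map
  set φ : Fin m → Fin m := fun t => ⟨((t : ℕ) + i - (n + j)) % m, Nat.mod_lt _ hm⟩ with hφ
  have hφval : ∀ t : Fin m, t ∈ Tj.erase t0 → (φ t : ℕ) = (t : ℕ) + i - (n + j) := by
    intro t ht
    have h1 := hge t ht
    have hin : (i : ℕ) < n := i.2
    have : (t : ℕ) + i - (n + j) < m := by
      have : (t : ℕ) < m := t.2
      omega
    simp only [hφ]
    exact Nat.mod_eq_of_lt this
  have hφlt : ∀ t : Fin m, t ∈ Tj.erase t0 → φ t ≤ t := by
    intro t ht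
    have := hφval t ht
    have := hge t ht
    rw [Fin.le_def]
    omega
  have hφmem : ∀ t : Fin m, t ∈ Tj.erase t0 → φ t ∈ Ti := by
    intro t ht
    have htmod : (t : ℕ) % n = j := (Finset.mem_filter.1 (Finset.mem_erase.1 ht).2).2
    have h1 := hge t ht
    have hdm := Nat.div_add_mod (t : ℕ) n
    have hq1 : 1 ≤ (t : ℕ) / n := by
      by_contra h
      push_neg at h
      interval_cases h' : (t : ℕ) / n
      · omega
    set q' := (t : ℕ) / n - 1 with hq'
    have htval : (t : ℕ) = n * q' + n + j := by
      have : n * ((t : ℕ) / n) = n * q' + n := by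
        rw [hq']
        rw [Nat.mul_sub, Nat.mul_one]
        omega
      omega
    have hlt : (t : ℕ) + i - (n + j) < m := by
      have := t.2
      have := i.2
      omega
    have hmod : ((t : ℕ) + i - (n + j)) % m = (t : ℕ) + i - (n + j) :=
      Nat.mod_eq_of_lt hlt
    have heq : (t : ℕ) + i - (n + j) = (i : ℕ) + n * q' := by omega
    simp only [hTi, Finset.mem_filter, Finset.mem_univ, true_and, hφ]
    rw [hmod, heq, Nat.add_mul_mod_self_left]
    exact Nat.mod_eq_of_lt i.2
  have hagentφ : ∀ t : Fin m, t ∈ Tj.erase t0 → agent (φ t) = i := by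
    intro t ht
    have h := hagent (φ t)
    have h2 : ((φ t : Fin m) : ℕ) % n = (i : ℕ) := (Finset.mem_filter.1 (hφmem t ht)).2
    exact Fin.ext (by rw [h, h2])
  calc ∑ t ∈ Tj.erase t0, v i (pick t)
      ≤ ∑ t ∈ Tj.erase t0, v i (pick (φ t)) := by
        apply Finset.sum_le_sum
        intro t ht
        have := greedy (φ t) t (hφlt t ht)
        rwa [hagentφ t ht] at this
    _ = ∑ t' ∈ (Tj.erase t0).image φ, v i (pick t') := by
        rw [Finset.sum_image]
        intro x hx y hy hxy
        have hvx := hφval x hx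
        have hvy := hφval y hy
        have hgx := hge x hx
        have hgy := hge y hy
        apply Fin.ext
        have : (φ x : ℕ) = (φ y : ℕ) := by rw [hxy]
        omega
    _ ≤ ∑ t' ∈ Ti, v i (pick t') := by
        apply Finset.sum_le_sum_of_subset_of_nonneg
        · intro x hx
          rcases Finset.mem_image.1 hx with ⟨t, ht, rfl⟩
          exact hφmem t ht
        · intro _ _ _
          exact hv _ _
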